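/- Let p ∈ ℝ^d and r = (r_1,…,r_d) ∈ ℝ_{>0}^d, let Δ := ∏_{i=1}^d [p_i−r_i, p_i+r_i] ⊂ ℝ^d, and let μ_Δ denote the Lebesgue measure restricted to Δ. For a ∈ ℝ and ρ > 0, let λ_n(a,ρ) denote the smallest eigenvalue of the (n+1)×(n+1) Hankel matrix ( ∫_{a−ρ}^{a+ρ} t^{j+k} dt )_{j,k=0,…,n}. Then for every n ∈ ℤ_{≥0}: Λ_n(μ_Δ) ≥ ∏_{i=1}^d λ_n(p_i, r_i). -/

import Mathlib

open MeasureTheory Complex Filter Matrix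
open scoped BigOperators ENNReal Topology

noncomputable section

namespace PFA

/-- The canonical inclusion of `ℝ^d` into `ℂ^d`. -/
def cpx {d : ℕ} (x : Fin d → ℝ) : Fin d → ℂ := fun i => (x i : ℂ)

/-- Euclidean norm on `ℂ^d`. -/
def enorm' {d : ℕ} (z : Fin d → ℂ) : ℝ := Real.sqrt (∑ i, ‖z i‖ ^ 2)

/-- An absolutely convex subset of `ℂ^d`. -/
def AbsConvex {d : ℕ} (K : Set (Fin d → ℂ)) : Prop :=
  ∀ x ∈ K, ∀ y ∈ K, ∀ a b : ℂ, ‖a‖ + ‖b‖ ≤ 1 → a • x + b • y ∈ K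

/-- The (topological) support of a Borel measure. -/
def msupport {X : Type*} [TopologicalSpace X] [MeasurableSpace X] (μ : Measure X) : Set X :=
  {x | ∀ U : Set X, IsOpen U → x ∈ U → 0 < μ U}

/-- translate of a set -/
def transSet {d : ℕ} (p : Fin d → ℂ) (K : Set (Fin d → ℂ)) : Set (Fin d → ℂ) :=
  (fun z => p + z) '' K

/-- multi-indices of degree at most `n` -/
abbrev MIdx (d n : ℕ) := {α : Fin d → ℕ // ∑ i, α i ≤ n}

instance instFintypeMIdx (d n : ℕ) : Fintype (MIdx d n) :=
  Fintype.subtype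
    ((Fintype.piFinset fun _ : Fin d => Finset.range (n + 1)).filter fun α => ∑ i, α i ≤ n)
    (by
      intro α
      simp only [Finset.mem_filter, Fintype.mem_piFinset, Finset.mem_range, Nat.lt_succ_iff]
      exact ⟨fun h => h.2, fun h =>
        ⟨fun i => le_trans (Finset.single_le_sum (fun j _ => Nat.zero_le (α j))
          (Finset.mem_univ i)) h, h⟩⟩)

/-- inclusion of multi-index sets -/
def midxIncl {d m n : ℕ} (h : m ≤ n) (a : MIdx d m) : MIdx d n := ⟨a.1, a.2.trans h⟩

/-- moment matrix `D_n(μ)` -/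
def momentMatrix (d n : ℕ) (μ : Measure (Fin d → ℝ)) : Matrix (MIdx d n) (MIdx d n) ℝ :=
  Matrix.of fun a b => ∫ x, ∏ i, x i ^ (a.1 i + b.1 i) ∂μ

/-- smallest eigenvalue of a real matrix -/
def minEig {ι : Type*} [Fintype ι] (M : Matrix ι ι ℝ) : ℝ :=
  sInf {t : ℝ | ∃ v : ι → ℝ, v ≠ 0 ∧ M.mulVec v = t • v}

/-- ℓ²→ℓ² operator norm of a matrix -/
def matOpNorm {𝕜 : Type*} [RCLike 𝕜] {ι κ : Type*} [Fintype ι] [Fintype κ]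
    (M : Matrix ι κ 𝕜) : ℝ :=
  sSup {t : ℝ | ∃ v : κ → 𝕜, (∑ j, ‖v j‖ ^ 2) ≤ 1 ∧
    t = Real.sqrt (∑ i, ‖∑ j, M i j * v j‖ ^ 2)}

/-- Frobenius norm of a matrix -/
def matFrobNorm {𝕜 : Type*} [RCLike 𝕜] {ι κ : Type*} [Fintype ι] [Fintype κ]
    (M : Matrix ι κ 𝕜) : ℝ :=
  Real.sqrt (∑ i, ∑ j, ‖M i j‖ ^ 2)

/-- the four Penrose conditions characterizing the Moore–Penrose pseudo-inverse -/
def IsMoorePenrose {ι κ : Type*} [Fintype ι] [Fintype κ]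
    (A : Matrix ι κ ℂ) (X : Matrix κ ι ℂ) : Prop :=
  A * X * A = A ∧ X * A * X = X ∧ (A * X)ᴴ = A * X ∧ (X * A)ᴴ = X * A

/-- complex partial derivative in the `k`-th coordinate -/
def pderivAt {d : ℕ} (k : Fin d) (g : (Fin d → ℂ) → ℂ) : (Fin d → ℂ) → ℂ :=
  fun z => fderiv ℂ g z (Pi.single k 1)

/-- iterated complex partial derivative `∂^γ` -/
def mpderiv {d : ℕ} (γ : Fin d → ℕ) (g : (Fin d → ℂ) → ℂ) : (Fin d → ℂ) → ℂ :=
  ((List.finRange d).map fun k => (pderivAt k)^[γ k]).foldr (fun F h => F h) g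

/-- the jet functional `ν_{q,κ}` -/
def jetFun {d : ℕ} (q : Fin d → ℂ) (κ : Fin d → ℕ) (h : (Fin d → ℂ) → ℂ) : ℂ :=
  ((Real.exp (-(∑ i, ‖q i‖ ^ 2) / 2) / Real.sqrt (∏ i, (κ i).factorial) : ℝ) : ℂ) *
    ∑ γ ∈ Fintype.piFinset fun i => Finset.range (κ i + 1),
      (∏ i, ((κ i).choose (γ i) : ℂ)) *
        (∏ i, (-(starRingEnd ℂ) (q i)) ^ (κ i - γ i)) * mpderiv γ h q

/-- the functions `u_{p,α}` (also used for `v_{q,β}`) -/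
def uFn {d : ℕ} (p : Fin d → ℂ) (α : Fin d → ℕ) (z : Fin d → ℂ) : ℂ :=
  ((Real.exp (-(∑ i, ‖p i‖ ^ 2) / 2) / Real.sqrt (∏ i, (α i).factorial) : ℝ) : ℂ) *
    (∏ i, (z i - p i) ^ (α i)) * Complex.exp (∑ i, z i * (starRingEnd ℂ) (p i))

/-- sample matrix `U_{p,n,Z}` (resp. `V_{q,n,W}`) -/
def sampMat {d N : ℕ} (n : ℕ) (p : Fin d → ℂ) (Z : Fin N → Fin d → ℂ) :
    Matrix (Fin N) (MIdx d n) ℂ :=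
  Matrix.of fun i a => uFn p a.1 (Z i)

/-- Data matrix `Ĉ_{m,n,Z}`, given a Moore–Penrose pseudo-inverse `X` of `U_{p,n,Z}ᴴ`:
the leftmost block of `V_{q,m,W}ᴴ * X`. -/
def dataMat {d r N : ℕ} {m n : ℕ} (hmn : m ≤ n) (q : Fin r → ℂ)
    (W : Fin N → Fin r → ℂ) (X : Matrix (Fin N) (MIdx d n) ℂ) :
    Matrix (MIdx r m) (MIdx d m) ℂ :=
  ((sampMat m q W)ᴴ * X).submatrix id (midxIncl hmn)

/-- jet representation matrix of the push-forward of `f` at `p` -/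
def IsJetMatrix {d r : ℕ} (m : ℕ) (p : Fin d → ℂ) (f : (Fin d → ℂ) → Fin r → ℂ)
    (C : Matrix (MIdx r m) (MIdx d m) ℂ) : Prop :=
  ∀ h : MvPolynomial (Fin r) ℂ, ∀ a : MIdx d m,
    jetFun p a.1 (fun z => MvPolynomial.eval (f z) h) =
      ∑ b : MIdx r m, C b a * jetFun (f p) b.1 (fun w => MvPolynomial.eval w h)

/-- `π^{-d}` times Lebesgue measure on `ℂ^d` -/
def μE (d : ℕ) : Measure (Fin d → ℂ) := ((ENNReal.ofReal Real.pi) ^ d)⁻¹ • volume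

/-- `e_w(z) = exp⟨z,w⟩` -/
def eW {d : ℕ} (w : Fin d → ℂ) (z : Fin d → ℂ) : ℂ :=
  Complex.exp (∑ i, z i * (starRingEnd ℂ) (w i))

/-- supporting function `h_K` -/
def suppFn {d : ℕ} (K : Set (Fin d → ℂ)) (ζ : Fin d → ℂ) : ℝ :=
  sSup ((fun z => (∑ i, ζ i * (starRingEnd ℂ) (z i)).re) '' K)

/-- polar set `K°` -/
def polarSet {d : ℕ} (K : Set (Fin d → ℂ)) : Set (Fin d → ℂ) :=
  {z | ∀ w ∈ K, ‖∑ i, z i * (starRingEnd ℂ) (w i)‖ ≤ 1}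

/-- membership in the Fock space -/
def MemFock {d : ℕ} (h : (Fin d → ℂ) → ℂ) : Prop :=
  Differentiable ℂ h ∧
    Integrable (fun z => ‖h z‖ ^ 2 * Real.exp (-(∑ i, ‖z i‖ ^ 2))) (μE d)

/-- Fock-space inner product -/
def fockInner {d : ℕ} (h g : (Fin d → ℂ) → ℂ) : ℂ :=
  ∫ z, h z * (starRingEnd ℂ) (g z) * ((Real.exp (-(∑ i, ‖z i‖ ^ 2)) : ℝ) : ℂ) ∂(μE d)

/-- orthogonal projection onto `span{u_{p,α} : |α| ≤ n}`, written out using the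
orthonormal system `u_{p,α}` -/
def jetProj {d : ℕ} (n : ℕ) (p : Fin d → ℂ) (g : (Fin d → ℂ) → ℂ) : (Fin d → ℂ) → ℂ :=
  fun z => ∑ a : MIdx d n, fockInner g (uFn p a.1) * uFn p a.1 z


/-- The `(n+1) × (n+1)` Hankel matrix of the Lebesgue measure on `[a-ρ, a+ρ]`. -/
def hankelMat (a ρ : ℝ) (n : ℕ) : Matrix (Fin (n + 1)) (Fin (n + 1)) ℝ :=
  Matrix.of fun j k => ∫ t in (a - ρ)..(a + ρ), t ^ ((j : ℕ) + (k : ℕ))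


/-! ### Auxiliary lemmas for Statement 18 -/

lemma isHermitian_of_symm' {ι : Type*} [Fintype ι] {M : Matrix ι ι ℝ}
    (h : ∀ a b, M a b = M b a) : M.IsHermitian := by
  ext a b; simpa [Matrix.conjTranspose_apply] using h b a

lemma sum_sq_pos' {ι : Type*} [Fintype ι] {v : ι → ℝ} (hv : v ≠ 0) :
    0 < ∑ a, v a ^ 2 := by
  obtain ⟨a, ha⟩ := Function.ne_iff.mp hv
  exact Finset.sum_pos' (fun i _ => sq_nonneg _) ⟨a, Finset.mem_univ a, sq_pos_of_ne_zero ha⟩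

lemma eig_mem' {ι : Type*} [Fintype ι] [DecidableEq ι] {M : Matrix ι ι ℝ}
    (hM : M.IsHermitian) (k : ι) :
    hM.eigenvalues k ∈ {t : ℝ | ∃ v : ι → ℝ, v ≠ 0 ∧ M.mulVec v = t • v} := by
  refine ⟨⇑(hM.eigenvectorBasis k), ?_, hM.mulVec_eigenvectorBasis k⟩
  intro h0
  have h1 : hM.eigenvectorBasis k = 0 := by
    apply PiLp.ext; intro i; exact congrFun h0 i
  have h2 := hM.eigenvectorBasis.orthonormal.1 k
  rw [h1] at h2; simp at h2

lemma eig_quadform' {ι : Type*} [Fintype ι] {M : Matrix ι ι ℝ} {t : ℝ} {v : ι → ℝ}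
    (h : M.mulVec v = t • v) :
    ∑ a, ∑ b, v a * v b * M a b = t * ∑ a, v a ^ 2 := by
  have h1 : ∀ a, ∑ b, M a b * v b = t * v a := fun a => by
    have := congrFun h a
    simpa [Matrix.mulVec, dotProduct] using this
  calc ∑ a, ∑ b, v a * v b * M a b = ∑ a, v a * ∑ b, M a b * v b := by
        refine Finset.sum_congr rfl fun a _ => ?_
        rw [Finset.mul_sum]
        exact Finset.sum_congr rfl fun b _ => by ring
    _ = ∑ a, v a * (t * v a) := by simp only [h1]
    _ = t * ∑ a, v a ^ 2 := by rw [Finset.mul_sum]; exact Finset.sum_congr rfl fun a _ => by ring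

lemma entry_spectral' {ι : Type*} [Fintype ι] [DecidableEq ι] {M : Matrix ι ι ℝ}
    (hM : M.IsHermitian) (j l : ι) :
    M j l = ∑ k, (hM.eigenvectorUnitary : Matrix ι ι ℝ) j k * hM.eigenvalues k *
      (hM.eigenvectorUnitary : Matrix ι ι ℝ) l k := by
  conv_lhs => rw [hM.spectral_theorem]
  simp [Matrix.mul_apply, Matrix.diagonal_apply, Matrix.star_apply, Finset.sum_ite_eq,
    mul_ite, ite_mul, mul_zero, zero_mul, Function.comp]

lemma entry_ortho' {ι : Type*} [Fintype ι] [DecidableEq ι] {M : Matrix ι ι ℝ}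
    (hM : M.IsHermitian) (j l : ι) :
    ∑ k, (hM.eigenvectorUnitary : Matrix ι ι ℝ) j k * (hM.eigenvectorUnitary : Matrix ι ι ℝ) l k
      = if j = l then 1 else 0 := by
  have h := Matrix.mem_unitaryGroup_iff.mp hM.eigenvectorUnitary.2
  have h2 := congrFun (congrFun (congrArg (fun A => (A : Matrix ι ι ℝ)) h) j) l
  simpa [Matrix.mul_apply, Matrix.star_apply, Matrix.one_apply] using h2

lemma grid_bound {d m : ℕ} (H : Fin d → Matrix (Fin m) (Fin m) ℝ)
    (hH : ∀ i, (H i).IsHermitian) (lb : Fin d → ℝ) (hlb0 : ∀ i, 0 ≤ lb i)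
    (hlb : ∀ i k, lb i ≤ (hH i).eigenvalues k) (w : (Fin d → Fin m) → ℝ) :
    (∏ i, lb i) * ∑ a, w a ^ 2 ≤ ∑ a, ∑ b, w a * w b * ∏ i, H i (a i) (b i) := by
  classical
  set U : Fin d → Matrix (Fin m) (Fin m) ℝ := fun i => ((hH i).eigenvectorUnitary : _) with hU
  set lam : Fin d → Fin m → ℝ := fun i => (hH i).eigenvalues with hlam
  set y : (Fin d → Fin m) → ℝ := fun c => ∑ a, w a * ∏ i, U i (a i) (c i) with hy
  have hprod : ∀ (F : Fin d → Fin m → ℝ), (∏ i, ∑ k, F i k)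
      = ∑ c : Fin d → Fin m, ∏ i, F i (c i) := by
    intro F
    rw [Finset.prod_univ_sum]
    simp [Fintype.piFinset_univ]
  have key1 : ∑ a, ∑ b, w a * w b * ∏ i, H i (a i) (b i)
      = ∑ c, (∏ i, lam i (c i)) * y c ^ 2 := by
    have h1 : ∀ a b : Fin d → Fin m, ∏ i, H i (a i) (b i)
        = ∑ c : Fin d → Fin m, ∏ i, (U i (a i) (c i) * lam i (c i) * U i (b i) (c i)) := by
      intro a b
      rw [← hprod fun i k => U i (a i) k * lam i k * U i (b i) k]
      exact Finset.prod_congr rfl fun i _ => entry_spectral' (hH i) (a i) (b i)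
    calc ∑ a, ∑ b, w a * w b * ∏ i, H i (a i) (b i)
        = ∑ a, ∑ b, ∑ c : Fin d → Fin m,
            w a * w b * ∏ i, (U i (a i) (c i) * lam i (c i) * U i (b i) (c i)) := by
          simp_rw [h1, Finset.mul_sum]
      _ = ∑ a, ∑ c : Fin d → Fin m, ∑ b,
            w a * w b * ∏ i, (U i (a i) (c i) * lam i (c i) * U i (b i) (c i)) := by
          exact Finset.sum_congr rfl fun a _ => Finset.sum_comm
      _ = ∑ c : Fin d → Fin m, ∑ a, ∑ b,
            w a * w b * ∏ i, (U i (a i) (c i) * lam i (c i) * U i (b i) (c i)) := by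
          exact Finset.sum_comm
      _ = ∑ c, (∏ i, lam i (c i)) * y c ^ 2 := by
          refine Finset.sum_congr rfl fun c _ => ?_
          rw [hy, sq, Finset.sum_mul_sum, Finset.mul_sum]
          refine Finset.sum_congr rfl fun a _ => ?_
          rw [Finset.mul_sum]
          refine Finset.sum_congr rfl fun b _ => ?_
          rw [Finset.prod_mul_distrib, Finset.prod_mul_distrib]
          ring
  have key2 : ∑ c, y c ^ 2 = ∑ a, w a ^ 2 := by
    have h2 : ∀ a b : Fin d → Fin m,
        (∑ c : Fin d → Fin m, ∏ i, (U i (a i) (c i) * U i (b i) (c i)))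
          = if a = b then (1:ℝ) else 0 := by
      intro a b
      rw [← hprod fun i k => U i (a i) k * U i (b i) k]
      by_cases hab : a = b
      · subst hab
        rw [if_pos rfl]
        refine Finset.prod_eq_one fun i _ => ?_
        have := entry_ortho' (hH i) (a i) (a i); rw [if_pos rfl] at this; exact this
      · rw [if_neg hab]
        obtain ⟨i, hi⟩ := Function.ne_iff.mp hab
        apply Finset.prod_eq_zero (Finset.mem_univ i)
        have := entry_ortho' (hH i) (a i) (b i); rw [if_neg hi] at this; exact this
    calc ∑ c, y c ^ 2
        = ∑ c : Fin d → Fin m, ∑ a, ∑ b, w a * w b * ∏ i, (U i (a i) (c i) * U i (b i) (c i)) := by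
          refine Finset.sum_congr rfl fun c _ => ?_
          rw [hy, sq, Finset.sum_mul_sum]
          refine Finset.sum_congr rfl fun a _ => ?_
          refine Finset.sum_congr rfl fun b _ => ?_
          rw [Finset.prod_mul_distrib]
          ring
      _ = ∑ a, ∑ b, ∑ c : Fin d → Fin m,
            w a * w b * ∏ i, (U i (a i) (c i) * U i (b i) (c i)) := by
          rw [Finset.sum_comm]
          exact Finset.sum_congr rfl fun a _ => Finset.sum_comm.symm
      _ = ∑ a, ∑ b, w a * w b * (if a = b then (1:ℝ) else 0) := by
          refine Finset.sum_congr rfl fun a _ => Finset.sum_congr rfl fun b _ => ?_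
          rw [← Finset.mul_sum, h2]
      _ = ∑ a, w a ^ 2 := by
          refine Finset.sum_congr rfl fun a _ => ?_
          simp [mul_ite, mul_one, mul_zero, Finset.sum_ite_eq, sq]
  rw [key1, ← key2, Finset.mul_sum]
  refine Finset.sum_le_sum fun c _ => ?_
  refine mul_le_mul_of_nonneg_right ?_ (sq_nonneg _)
  exact Finset.prod_le_prod (fun i _ => hlb0 i) (fun i _ => hlb i (c i))

lemma hankel_entry {a ρ : ℝ} (hρ : 0 ≤ ρ) (n : ℕ) (j k : Fin (n+1)) :
    hankelMat a ρ n j k = ∫ t in Set.Icc (a - ρ) (a + ρ), t ^ ((j:ℕ) + (k:ℕ)) := by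
  rw [hankelMat, Matrix.of_apply, intervalIntegral.integral_of_le (by linarith),
    MeasureTheory.integral_Icc_eq_integral_Ioc]

lemma hankel_quadform {a ρ : ℝ} (hρ : 0 ≤ ρ) (n : ℕ) (c : Fin (n+1) → ℝ) :
    ∑ j, ∑ k, c j * c k * hankelMat a ρ n j k
      = ∫ t in Set.Icc (a - ρ) (a + ρ), (∑ j, c j * t ^ (j:ℕ)) ^ 2 := by
  have hint : ∀ j k : Fin (n+1), MeasureTheory.IntegrableOn
      (fun t : ℝ => c j * c k * t ^ ((j:ℕ) + (k:ℕ))) (Set.Icc (a-ρ) (a+ρ)) := fun j k =>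
    (((continuous_const.mul (continuous_pow _)).continuousOn
      (s := Set.Icc (a-ρ) (a+ρ)))).integrableOn_Icc
  have hpt : ∀ t : ℝ, (∑ j, c j * t ^ (j:ℕ)) ^ 2
      = ∑ j, ∑ k, c j * c k * t ^ ((j:ℕ) + (k:ℕ)) := by
    intro t
    rw [sq, Finset.sum_mul_sum]
    exact Finset.sum_congr rfl fun j _ => Finset.sum_congr rfl fun k _ => by
      rw [pow_add]; ring
  calc ∑ j, ∑ k, c j * c k * hankelMat a ρ n j k
      = ∑ j, ∑ k, ∫ t in Set.Icc (a-ρ) (a+ρ), c j * c k * t ^ ((j:ℕ)+(k:ℕ)) := by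
        refine Finset.sum_congr rfl fun j _ => Finset.sum_congr rfl fun k _ => ?_
        rw [hankel_entry hρ, MeasureTheory.integral_const_mul]
    _ = ∫ t in Set.Icc (a-ρ) (a+ρ), ∑ j, ∑ k, c j * c k * t ^ ((j:ℕ)+(k:ℕ)) := by
        rw [MeasureTheory.integral_finset_sum _
          (fun j _ => integrable_finset_sum _ (fun k _ => hint j k))]
        exact Finset.sum_congr rfl fun j _ =>
          (MeasureTheory.integral_finset_sum _ (fun k _ => hint j k)).symm
    _ = ∫ t in Set.Icc (a-ρ) (a+ρ), (∑ j, c j * t ^ (j:ℕ)) ^ 2 := by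
        simp_rw [hpt]

lemma hankel_isHermitian (a ρ : ℝ) (n : ℕ) : (hankelMat a ρ n).IsHermitian :=
  isHermitian_of_symm' fun j k => by
    show (∫ t in (a - ρ)..(a + ρ), t ^ ((j:ℕ) + (k:ℕ)))
      = ∫ t in (a - ρ)..(a + ρ), t ^ ((k:ℕ) + (j:ℕ))
    rw [Nat.add_comm]

lemma hankel_eig_nonneg {a ρ : ℝ} (hρ : 0 ≤ ρ) (n : ℕ) :
    ∀ t ∈ {t : ℝ | ∃ v : Fin (n+1) → ℝ, v ≠ 0 ∧ (hankelMat a ρ n).mulVec v = t • v},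
      (0:ℝ) ≤ t := by
  rintro t ⟨v, hv, heq⟩
  have h1 := eig_quadform' heq
  have h2 : (0:ℝ) ≤ t * ∑ j, v j ^ 2 := by
    rw [← h1, hankel_quadform hρ]
    exact MeasureTheory.integral_nonneg fun t => sq_nonneg _
  nlinarith [sum_sq_pos' hv]

lemma minEig_hankel_nonneg {a ρ : ℝ} (hρ : 0 ≤ ρ) (n : ℕ) :
    0 ≤ minEig (hankelMat a ρ n) :=
  le_csInf ⟨_, eig_mem' (hankel_isHermitian a ρ n) 0⟩ (hankel_eig_nonneg hρ n)

lemma minEig_hankel_le {a ρ : ℝ} (hρ : 0 ≤ ρ) {n : ℕ}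
    (hH : (hankelMat a ρ n).IsHermitian) (k : Fin (n+1)) :
    minEig (hankelMat a ρ n) ≤ hH.eigenvalues k :=
  csInf_le ⟨0, fun t ht => hankel_eig_nonneg hρ n t ht⟩ (eig_mem' hH k)

def toGrid {d n : ℕ} (a : MIdx d n) : Fin d → Fin (n+1) := fun i =>
  ⟨a.1 i, Nat.lt_succ_of_le (le_trans (Finset.single_le_sum
    (fun j _ => Nat.zero_le (a.1 j)) (Finset.mem_univ i)) a.2)⟩

lemma sum_grid_eq {d n : ℕ} (f : (Fin d → Fin (n+1)) → ℝ)
    (hf : ∀ c, ¬ ((∑ i, ((c i : ℕ))) ≤ n) → f c = 0) :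
    ∑ c, f c = ∑ a : MIdx d n, f (toGrid a) := by
  classical
  have h1 : ∑ c : Fin d → Fin (n+1), f c
      = ∑ c ∈ Finset.univ.filter (fun c => (∑ i, ((c i : ℕ))) ≤ n), f c :=
    (Finset.sum_subset (Finset.filter_subset _ _)
      (fun c _ hc => hf c (by simpa using hc))).symm
  have hgrid : ∀ (c : Fin d → Fin (n+1)) (hc : (∑ i, ((c i : ℕ))) ≤ n),
      toGrid (⟨fun i => (c i : ℕ), hc⟩ : MIdx d n) = c := by
    intro c hc
    funext i
    exact Fin.ext rfl
  rw [h1]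
  refine Finset.sum_nbij' (i := fun c => if h : (∑ i, ((c i : ℕ))) ≤ n then
      (⟨fun i => (c i : ℕ), h⟩ : MIdx d n) else ⟨fun _ => 0, by simp⟩)
    (j := fun a => toGrid a) ?_ ?_ ?_ ?_ ?_
  · intro c _; exact Finset.mem_univ _
  · intro a _
    simp only [Finset.mem_filter, Finset.mem_univ, true_and]
    simpa [toGrid] using a.2
  · intro c hc
    simp only [Finset.mem_filter, Finset.mem_univ, true_and] at hc
    rw [dif_pos hc, hgrid c hc]
  · intro a _
    have h : (∑ i, ((toGrid a i : ℕ))) ≤ n := by simpa [toGrid] using a.2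
    rw [dif_pos h]
    exact Subtype.ext (funext fun i => rfl)
  · intro c hc
    simp only [Finset.mem_filter, Finset.mem_univ, true_and] at hc
    rw [dif_pos hc, hgrid c hc]

lemma moment_entry (d n : ℕ) (p r : Fin d → ℝ) (a b : MIdx d n) :
    momentMatrix d n (volume.restrict (Set.univ.pi fun i => Set.Icc (p i - r i) (p i + r i))) a b
      = ∏ i, ∫ t in Set.Icc (p i - r i) (p i + r i), t ^ (a.1 i + b.1 i) := by
  rw [momentMatrix, Matrix.of_apply,
    ← MeasureTheory.integral_indicator (MeasurableSet.univ_pi fun i => measurableSet_Icc)]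
  have hind : (Set.univ.pi fun i => Set.Icc (p i - r i) (p i + r i)).indicator
        (fun x => ∏ i, x i ^ (a.1 i + b.1 i))
      = fun x => ∏ i, (Set.Icc (p i - r i) (p i + r i)).indicator
        (fun t => t ^ (a.1 i + b.1 i)) (x i) := by
    funext x
    by_cases hx : x ∈ Set.univ.pi fun i => Set.Icc (p i - r i) (p i + r i)
    · rw [Set.indicator_of_mem hx]
      refine Finset.prod_congr rfl fun i _ => ?_
      rw [Set.indicator_of_mem (hx i (Set.mem_univ i))]
    · rw [Set.indicator_of_notMem hx]
      rw [Set.mem_pi] at hx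
      push_neg at hx
      obtain ⟨i, _, hi⟩ := hx
      exact (Finset.prod_eq_zero (Finset.mem_univ i) (Set.indicator_of_notMem hi _)).symm
  rw [hind, MeasureTheory.integral_fintype_prod_volume_eq_prod
    (f := fun i t => (Set.Icc (p i - r i) (p i + r i)).indicator (fun s => s ^ (a.1 i + b.1 i)) t)]
  exact Finset.prod_congr rfl fun i _ => MeasureTheory.integral_indicator measurableSet_Icc


/-- lower bound for the smallest eigenvalue of the moment
matrix of the Lebesgue measure on a rectangle. -/
theorem statement18 (d n : ℕ) (p r : Fin d → ℝ) (hr : ∀ i, 0 < r i) :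
    minEig (momentMatrix d n
        (volume.restrict (Set.univ.pi fun i => Set.Icc (p i - r i) (p i + r i)))) ≥
      ∏ i, minEig (hankelMat (p i) (r i) n) := by
  classical
  set M := momentMatrix d n
    (volume.restrict (Set.univ.pi fun i => Set.Icc (p i - r i) (p i + r i))) with hMdef
  have hHM : M.IsHermitian := by
    refine isHermitian_of_symm' fun a b => ?_
    show (∫ x, ∏ i, x i ^ (a.1 i + b.1 i)
        ∂(volume.restrict (Set.univ.pi fun i => Set.Icc (p i - r i) (p i + r i))))
      = ∫ x, ∏ i, x i ^ (b.1 i + a.1 i)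
        ∂(volume.restrict (Set.univ.pi fun i => Set.Icc (p i - r i) (p i + r i)))
    exact congrArg _ (funext fun x => Finset.prod_congr rfl fun i _ => by rw [Nat.add_comm])
  have hHi : ∀ i, (hankelMat (p i) (r i) n).IsHermitian := fun i => hankel_isHermitian _ _ _
  have hne : {t : ℝ | ∃ v : MIdx d n → ℝ, v ≠ 0 ∧ M.mulVec v = t • v}.Nonempty :=
    ⟨_, eig_mem' hHM ⟨fun _ => 0, by simp⟩⟩
  rw [ge_iff_le]
  refine le_csInf hne ?_
  rintro t ⟨v, hv, heq⟩
  have hMent : ∀ a b : MIdx d n,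
      M a b = ∏ i, hankelMat (p i) (r i) n (toGrid a i) (toGrid b i) := by
    intro a b
    rw [hMdef, moment_entry d n p r a b]
    refine Finset.prod_congr rfl fun i _ => ?_
    rw [hankel_entry (hr i).le]
    rfl
  set w : (Fin d → Fin (n+1)) → ℝ := fun c =>
    if h : (∑ i, ((c i : ℕ))) ≤ n then v ⟨fun i => (c i : ℕ), h⟩ else 0 with hwdef
  have hw : ∀ a : MIdx d n, w (toGrid a) = v a := by
    intro a
    have h : (∑ i, ((toGrid a i : ℕ))) ≤ n := by simpa [toGrid] using a.2
    simp only [hwdef]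
    rw [dif_pos h]
    exact congrArg v (Subtype.ext (funext fun i => rfl))
  have hwz : ∀ c, ¬ ((∑ i, ((c i : ℕ))) ≤ n) → w c = 0 := by
    intro c h
    simp only [hwdef]
    rw [dif_neg h]
  have hsq : ∑ c, w c ^ 2 = ∑ a, v a ^ 2 := by
    rw [sum_grid_eq (fun c => w c ^ 2) (fun c h => by simp [hwz c h])]
    exact Finset.sum_congr rfl fun a _ => by simp [hw]
  have hqf : ∑ c, ∑ c', w c * w c' * ∏ i, hankelMat (p i) (r i) n (c i) (c' i)
      = ∑ a, ∑ b, v a * v b * M a b := by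
    rw [sum_grid_eq (fun c => ∑ c', w c * w c' * ∏ i, hankelMat (p i) (r i) n (c i) (c' i))
      (fun c h => by simp [hwz c h])]
    refine Finset.sum_congr rfl fun a _ => ?_
    rw [sum_grid_eq (fun c' => w (toGrid a) * w c' *
        ∏ i, hankelMat (p i) (r i) n (toGrid a i) (c' i))
      (fun c h => by simp [hwz c h])]
    refine Finset.sum_congr rfl fun b _ => ?_
    rw [hw, hw, hMent]
  have hgb := grid_bound (fun i => hankelMat (p i) (r i) n) hHi
      (fun i => minEig (hankelMat (p i) (r i) n))
      (fun i => minEig_hankel_nonneg (hr i).le n)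
      (fun i k => minEig_hankel_le (hr i).le (hHi i) k) w
  have h2 : (∏ i, minEig (hankelMat (p i) (r i) n)) * ∑ a, v a ^ 2 ≤ t * ∑ a, v a ^ 2 := by
    calc (∏ i, minEig (hankelMat (p i) (r i) n)) * ∑ a, v a ^ 2
        = (∏ i, minEig (hankelMat (p i) (r i) n)) * ∑ c, w c ^ 2 := by rw [hsq]
      _ ≤ ∑ c, ∑ c', w c * w c' * ∏ i, hankelMat (p i) (r i) n (c i) (c' i) := hgb
      _ = ∑ a, ∑ b, v a * v b * M a b := hqf
      _ = t * ∑ a, v a ^ 2 := eig_quadform' heq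
  exact le_of_mul_le_mul_right h2 (sum_sq_pos' hv)

end PFA
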